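/- The limit set of a cellular automaton is either a singleton or infinite. -/

import Mathlib

section Aux

variable {A : Type*} [Fintype A] [Nonempty A] [TopologicalSpace A] [DiscreteTopology A]

open Topology

set_option linter.unusedSectionVars false

/-- Shift by `n`. -/
private def shf (n : ℤ) (x : ℤ → A) : ℤ → A := fun i => x (i + n)

private lemma shf_shf (m n : ℤ) (x : ℤ → A) : shf m (shf n x) = shf (n + m) x := by
  funext i; show x (i + m + n) = x (i + (n + m)); ring_nf

private lemma shf_zero (x : ℤ → A) : shf 0 x = x := by funext i; simp [shf]

private lemma aux_comm (F : (ℤ → A) → (ℤ → A))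
    (hcomm : ∀ x : ℤ → A, F (fun i => x (i + 1)) = fun i => F x (i + 1)) :
    ∀ (n : ℤ) (x : ℤ → A), F (shf n x) = shf n (F x) := by
  have h1 : ∀ x : ℤ → A, F (shf 1 x) = shf 1 (F x) := fun x => hcomm x
  intro n
  induction n using Int.induction_on with
  | zero => intro x; rw [shf_zero, shf_zero]
  | succ i hi =>
      intro x
      have : shf ((i : ℤ) + 1) x = shf 1 (shf i x) := (shf_shf 1 i x).symm
      rw [this, h1, hi, shf_shf]
  | pred i hi =>
      intro x
      have e1 : shf 1 (shf (-(i : ℤ) - 1) x) = shf (-(i : ℤ)) x := by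
        rw [shf_shf]; ring_nf
      have e2 : F (shf (-(i : ℤ)) x) = shf (-(i : ℤ)) (F x) := hi x
      have e3 : shf 1 (F (shf (-(i : ℤ) - 1) x)) = shf (-(i : ℤ)) (F x) := by
        rw [← h1, e1, e2]
      have e4 : shf (-1) (shf 1 (F (shf (-(i : ℤ) - 1) x)))
          = shf (-1) (shf (-(i : ℤ)) (F x)) := by rw [e3]
      rw [shf_shf, shf_shf, show (1 : ℤ) + -1 = 0 by ring,
        show -(i : ℤ) + -1 = -(i : ℤ) - 1 by ring, shf_zero] at e4
      exact e4

private lemma aux_iter_comm (F : (ℤ → A) → (ℤ → A))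
    (hcm : ∀ (n : ℤ) (x : ℤ → A), F (shf n x) = shf n (F x)) :
    ∀ (j : ℕ) (n : ℤ) (x : ℤ → A), F^[j] (shf n x) = shf n (F^[j] x) := by
  intro j
  induction j with
  | zero => intro n x; simp
  | succ j ih =>
      intro n x
      rw [Function.iterate_succ_apply', Function.iterate_succ_apply', ih, hcm]

private lemma aux_radius (F : (ℤ → A) → (ℤ → A)) (hF : Continuous F) :
    ∃ r : ℕ, ∀ x y : ℤ → A, (∀ i : ℤ, i.natAbs ≤ r → x i = y i) → F x 0 = F y 0 := by
  have hg : Continuous (fun x : ℤ → A => F x 0) := (continuous_apply (0 : ℤ)).comp hF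
  have key : ∀ x : ℤ → A, ∃ I : Set ℤ, I.Finite ∧
      ∀ y : ℤ → A, (∀ i ∈ I, y i = x i) → F y 0 = F x 0 := by
    intro x
    have hopen : IsOpen {y : ℤ → A | F y 0 = F x 0} :=
      hg.isOpen_preimage {F x 0} (isOpen_discrete _)
    have hmem : {y : ℤ → A | F y 0 = F x 0} ∈ 𝓝 x := hopen.mem_nhds rfl
    rw [nhds_pi, Filter.mem_pi] at hmem
    obtain ⟨I, hIfin, t, ht, hsub⟩ := hmem
    refine ⟨I, hIfin, fun y hy => ?_⟩
    apply hsub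
    intro i hi
    have hpure : t i ∈ 𝓝 (x i) := ht i
    have : x i ∈ t i := mem_of_mem_nhds hpure
    simpa [hy i hi] using this
  choose I hIfin hIspec using key
  have hopen : ∀ x : ℤ → A, IsOpen ((I x).pi (fun i => ({x i} : Set A))) :=
    fun x => isOpen_set_pi (hIfin x) (fun a _ => isOpen_discrete _)
  have hcover : (Set.univ : Set (ℤ → A)) ⊆ ⋃ x : ℤ → A, (I x).pi (fun i => ({x i} : Set A)) := by
    intro x _
    exact Set.mem_iUnion.mpr ⟨x, fun i _ => rfl⟩
  obtain ⟨s, hs⟩ := isCompact_univ.elim_finite_subcover _ hopen hcover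
  refine ⟨s.sup (fun c => (hIfin c).toFinset.sup Int.natAbs), fun x y hxy => ?_⟩
  have hx := hs (Set.mem_univ x)
  rw [Set.mem_iUnion₂] at hx
  obtain ⟨c, hcs, hxc⟩ := hx
  have hbound : ∀ i ∈ I c, i.natAbs ≤ s.sup (fun c => (hIfin c).toFinset.sup Int.natAbs) := by
    intro i hi
    calc i.natAbs ≤ (hIfin c).toFinset.sup Int.natAbs :=
          Finset.le_sup ((hIfin c).mem_toFinset.mpr hi)
      _ ≤ _ := Finset.le_sup (f := fun c => (hIfin c).toFinset.sup Int.natAbs) hcs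
  have hxeq : F x 0 = F c 0 := hIspec c x (fun i hi => hxc i hi)
  have hyeq : F y 0 = F c 0 := by
    refine hIspec c y (fun i hi => ?_)
    rw [← hxy i (hbound i hi)]
    exact hxc i hi
  rw [hxeq, hyeq]

private lemma aux_local (F : (ℤ → A) → (ℤ → A))
    (hcm : ∀ (n : ℤ) (x : ℤ → A), F (shf n x) = shf n (F x)) (r : ℕ)
    (hr : ∀ x y : ℤ → A, (∀ i : ℤ, i.natAbs ≤ r → x i = y i) → F x 0 = F y 0) :
    ∀ (n : ℤ) (x y : ℤ → A), (∀ i : ℤ, (i - n).natAbs ≤ r → x i = y i) → F x n = F y n := by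
  intro n x y h
  have h1 : F (shf n x) 0 = F (shf n y) 0 := by
    refine hr _ _ (fun i hi => ?_)
    show x (i + n) = y (i + n)
    exact h (i + n) (by simpa using hi)
  have e1 : F (shf n x) 0 = F x n := by rw [hcm]; show F x (0 + n) = F x n; rw [zero_add]
  have e2 : F (shf n y) 0 = F y n := by rw [hcm]; show F y (0 + n) = F y n; rw [zero_add]
  rw [← e1, ← e2, h1]

private lemma aux_iter_rule (F : (ℤ → A) → (ℤ → A))
    (hcm : ∀ (n : ℤ) (x : ℤ → A), F (shf n x) = shf n (F x)) (r : ℕ)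
    (hr : ∀ x y : ℤ → A, (∀ i : ℤ, i.natAbs ≤ r → x i = y i) → F x 0 = F y 0) :
    ∀ (j : ℕ) (x y : ℤ → A) (n : ℤ),
      (∀ i : ℤ, (i - n).natAbs ≤ j * r → x i = y i) → F^[j] x n = F^[j] y n := by
  intro j
  induction j with
  | zero =>
      intro x y n h
      simpa using h n (by simp)
  | succ j ih =>
      intro x y n h
      rw [Function.iterate_succ_apply', Function.iterate_succ_apply']
      refine aux_local F hcm r hr n _ _ (fun i hi => ?_)
      refine ih x y i (fun i' hi' => ?_)
      refine h i' ?_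
      have : i' - n = (i' - i) + (i - n) := by ring
      rw [this]
      calc ((i' - i) + (i - n)).natAbs ≤ (i' - i).natAbs + (i - n).natAbs :=
            Int.natAbs_add_le _ _
        _ ≤ j * r + r := Nat.add_le_add hi' hi
        _ = (j + 1) * r := by ring

private lemma aux_step_const {y : ℤ → A} (h : ∀ i : ℤ, y (i + 1) = y i) : ∀ i : ℤ, y i = y 0 := by
  intro i
  induction i using Int.induction_on with
  | zero => rfl
  | succ i hi => rw [h i, hi]
  | pred i hi =>
      have := h (-(i : ℤ) - 1)
      rw [show (-(i : ℤ) - 1) + 1 = -(i : ℤ) by ring] at this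
      rw [← this, hi]

end Aux

/-- The limit set of a cellular automaton is either a singleton or infinite. -/
theorem stmt13 {A : Type*} [Fintype A] [Nonempty A] [TopologicalSpace A] [DiscreteTopology A]
    (F : (ℤ → A) → (ℤ → A)) (hF : Continuous F)
    (hcomm : ∀ x : ℤ → A, F (fun i => x (i + 1)) = fun i => F x (i + 1)) :
    (∃ z : ℤ → A, (⋂ j : ℕ, F^[j] '' Set.univ) = {z})
      ∨ (⋂ j : ℕ, F^[j] '' Set.univ).Infinite := by
  classical
  have hcm : ∀ (n : ℤ) (x : ℤ → A), F (shf n x) = shf n (F x) := aux_comm F hcomm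
  obtain ⟨r, hr⟩ := aux_radius F hF
  have hic : ∀ (j : ℕ) (n : ℤ) (x : ℤ → A), F^[j] (shf n x) = shf n (F^[j] x) :=
    aux_iter_comm F hcm
  have hiter := aux_iter_rule F hcm r hr
  have himg : (⋂ j : ℕ, F^[j] '' Set.univ) = ⋂ j : ℕ, Set.range F^[j] := by
    simp [Set.image_univ]
  rw [himg]
  -- basic facts about the ranges
  have hRclosed : ∀ j : ℕ, IsClosed (Set.range F^[j]) := by
    intro j
    have hc : IsCompact (Set.range F^[j]) := by
      rw [← Set.image_univ]
      exact isCompact_univ.image (hF.iterate j)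
    exact hc.isClosed
  have hRmono : ∀ k j : ℕ, k ≤ j → Set.range F^[j] ⊆ Set.range F^[k] := by
    rintro k j hkj _ ⟨x, rfl⟩
    refine ⟨F^[j - k] x, ?_⟩
    rw [← Function.iterate_add_apply, Nat.add_sub_cancel' hkj]
  have hRshift : ∀ (j : ℕ) (n : ℤ) (x : ℤ → A),
      x ∈ Set.range F^[j] → shf n x ∈ Set.range F^[j] := by
    rintro j n _ ⟨u, rfl⟩
    exact ⟨shf n u, hic j n u⟩
  -- uniform configurations
  set U : Set (ℤ → A) := {x | ∀ i : ℤ, x i = x 0} with hU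
  have hUclosed : IsClosed U := by
    have : U = ⋂ i : ℤ, {x : ℤ → A | x i = x 0} := by
      ext x; simp [hU, Set.mem_iInter]
    rw [this]
    exact isClosed_iInter fun i => isClosed_eq (continuous_apply i) (continuous_apply 0)
  have hUF : ∀ x, x ∈ U → F x ∈ U := by
    intro x hx
    have hsx : shf 1 x = x := by
      funext i
      show x (i + 1) = x i
      rw [hx (i + 1), hx i]
    have : shf 1 (F x) = F x := by rw [← hcm 1 x, hsx]
    have hstep : ∀ i : ℤ, F x (i + 1) = F x i := fun i => congrFun this i
    exact fun i => aux_step_const hstep i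
  have hUiter : ∀ (j : ℕ) (x), x ∈ U → F^[j] x ∈ U := by
    intro j
    induction j with
    | zero => intro x hx; simpa using hx
    | succ j ih =>
        intro x hx
        rw [Function.iterate_succ_apply']
        exact hUF _ (ih x hx)
  -- a uniform configuration in the limit set
  obtain ⟨z, hz⟩ :
      (⋂ j : ℕ, (Set.range F^[j] ∩ U)).Nonempty := by
    refine IsCompact.nonempty_iInter_of_sequence_nonempty_isCompact_isClosed
      (fun j => Set.range F^[j] ∩ U) (fun j => Set.inter_subset_inter_left U (hRmono j (j+1) (by omega)))
      (fun j => ?_) (((hRclosed 0).inter hUclosed).isCompact)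
      (fun j => (hRclosed j).inter hUclosed)
    have ha : (fun _ : ℤ => (Classical.arbitrary A)) ∈ U := fun i => rfl
    exact ⟨F^[j] (fun _ => Classical.arbitrary A), ⟨_, rfl⟩, hUiter j _ ha⟩
  have hzΩ : ∀ j : ℕ, z ∈ Set.range F^[j] := fun j => (Set.mem_iInter.1 hz j).1
  have hzU : z ∈ U := (Set.mem_iInter.1 hz 0).2
  set a : A := z 0 with ha
  have hzconst : ∀ i : ℤ, z i = a := fun i => hzU i
  rcases Set.finite_or_infinite (⋂ j : ℕ, Set.range F^[j]) with hfin | hinf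
  · left
    refine ⟨z, ?_⟩
    ext x
    simp only [Set.mem_singleton_iff]
    constructor
    · intro hx
      by_contra hne
      -- x differs from the uniform z at some coordinate
      have : ∃ i0 : ℤ, x i0 ≠ a := by
        by_contra hc
        push_neg at hc
        exact hne (funext fun i => by rw [hc i, hzconst i])
      obtain ⟨i0, hi0⟩ := this
      have hxΩ : ∀ j : ℕ, x ∈ Set.range F^[j] := fun j => Set.mem_iInter.1 hx j
      -- the closed "frontier" set
      set D : Set (ℤ → A) := {w | (∀ i : ℤ, i < 0 → w i = a) ∧ w 0 ≠ a} with hD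
      have hDclosed : IsClosed D := by
        have h1 : IsClosed {w : ℤ → A | ∀ i : ℤ, i < 0 → w i = a} := by
          have : {w : ℤ → A | ∀ i : ℤ, i < 0 → w i = a}
              = ⋂ i : ℤ, {w : ℤ → A | i < 0 → w i = a} := by
            ext w; simp [Set.mem_iInter]
          rw [this]
          refine isClosed_iInter fun i => ?_
          by_cases h : i < 0
          · simp only [h, forall_true_left]
            exact isClosed_eq (continuous_apply i) continuous_const
          · simp only [h, false_implies]
            exact isClosed_univ
        have h2 : IsClosed {w : ℤ → A | w 0 ≠ a} := by
          have : {w : ℤ → A | w 0 ≠ a} = {w : ℤ → A | w 0 = a}ᶜ := rfl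
          rw [this, isClosed_compl_iff]
          exact (continuous_apply (0 : ℤ) (A := fun _ : ℤ => A)).isOpen_preimage ({a} : Set A) (isOpen_discrete _)
        exact h1.inter h2
      -- the splice: for every j there is an element of range F^[j] in D
      have hTne : ∀ j : ℕ, (Set.range F^[j] ∩ D).Nonempty := by
        intro j
        set m : ℤ := ((j * r : ℕ) : ℤ) with hm
        obtain ⟨u, hu⟩ := hzΩ j
        have hyj : shf (i0 - m) x ∈ Set.range F^[j] := hRshift j _ x (hxΩ j)
        obtain ⟨v, hv⟩ := hyj
        set s : ℤ → A := fun i => if i < 0 then u i else v i with hs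
        set ζ : ℤ → A := F^[j] s with hζ
        have hleft : ∀ n : ℤ, n < -m → ζ n = a := by
          intro n hn
          have : F^[j] s n = F^[j] u n := by
            refine hiter j s u n (fun i hi => ?_)
            have h1 : (i - n : ℤ) ≤ ((i - n).natAbs : ℤ) := Int.le_natAbs
            have h2 : ((i - n).natAbs : ℤ) ≤ m := by rw [hm]; exact Int.ofNat_le.mpr hi
            have : i < 0 := by omega
            simp [hs, this]
          rw [hζ, this, hu, hzconst]
        have hmid : ζ m ≠ a := by
          have : F^[j] s m = F^[j] v m := by
            refine hiter j s v m (fun i hi => ?_)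
            have h1 : (m - i : ℤ) ≤ ((m - i).natAbs : ℤ) := Int.le_natAbs
            have heq : (m - i).natAbs = (i - m).natAbs := by
              rw [← Int.natAbs_neg, neg_sub]
            have h2 : ((m - i).natAbs : ℤ) ≤ m := by rw [heq, hm]; exact Int.ofNat_le.mpr hi
            have : ¬ (i < 0) := by omega
            simp [hs, this]
          rw [hζ, this, hv]
          show x (m + (i0 - m)) ≠ a
          rw [show m + (i0 - m) = i0 by ring]
          exact hi0
        -- least coordinate where ζ differs from a
        obtain ⟨t, hPt, hmin⟩ :=
          Int.exists_least_of_bdd (P := fun t => ζ t ≠ a)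
            ⟨-m, fun n hn => by by_contra hc; push_neg at hc; exact hn (hleft n (by omega))⟩
            ⟨m, hmid⟩
        refine ⟨shf t ζ, hRshift j t ζ ⟨s, hζ.symm⟩, ?_, ?_⟩
        · intro i hilt
          show ζ (i + t) = a
          by_contra hc
          have := hmin (i + t) hc
          omega
        · show ζ (0 + t) ≠ a
          rwa [zero_add]
      -- compactness: an element of the limit set in D
      obtain ⟨w, hw⟩ :
          (⋂ j : ℕ, (Set.range F^[j] ∩ D)).Nonempty := by
        refine IsCompact.nonempty_iInter_of_sequence_nonempty_isCompact_isClosed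
          (fun j => Set.range F^[j] ∩ D)
          (fun j => Set.inter_subset_inter_left D (hRmono j (j+1) (by omega)))
          hTne (((hRclosed 0).inter hDclosed).isCompact)
          (fun j => (hRclosed j).inter hDclosed)
      have hwΩ : w ∈ ⋂ j : ℕ, Set.range F^[j] :=
        Set.mem_iInter.2 fun j => (Set.mem_iInter.1 hw j).1
      have hwD : w ∈ D := (Set.mem_iInter.1 hw 0).2
      -- w is shift-periodic since the limit set is finite; contradiction
      haveI : Finite ↥(⋂ j : ℕ, Set.range F^[j]) := hfin.to_subtype
      set f : ℕ → ↥(⋂ j : ℕ, Set.range F^[j]) := fun n =>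
        ⟨shf n w, Set.mem_iInter.2 fun j => hRshift j n w (Set.mem_iInter.1 hwΩ j)⟩ with hf
      obtain ⟨mm, nn, hmn, hfeq⟩ := Finite.exists_ne_map_eq_of_infinite f
      have hshf : shf mm w = shf nn w := congrArg Subtype.val hfeq
      have key : ∀ p q : ℕ, p < q → shf p w = shf q w → False := by
        intro p q hpq hsid
        have hper : ∀ i : ℤ, w (i + p) = w (i + q) := fun i => congrFun hsid i
        have h1 : w (-(q : ℤ) + p) = w 0 := by
          have := hper (-(q : ℤ))
          rwa [show (-(q : ℤ) + q) = 0 by ring] at this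
        have h2 : w (-(q : ℤ) + p) = a := by
          refine hwD.1 _ ?_
          have : (p : ℤ) < q := by exact_mod_cast hpq
          omega
        exact hwD.2 (h1.symm.trans h2)
      rcases hmn.lt_or_gt with h | h
      · exact absurd hshf (by intro hs; exact key mm nn h hs)
      · exact absurd hshf.symm (by intro hs; exact key nn mm h hs)
    · rintro rfl
      exact Set.mem_iInter.2 hzΩ
  · exact Or.inr hinf
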